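/- Let a > 0 and let P(a) be the plane {(c₁ r⁻³, c₂ r⁻³) : c₁, c₂ ∈ ℝ} in Ḣ¹ × L²(r > a) of radial functions on ℝ⁵. The orthogonal projection π_a onto P(a) is given by π_a(f,0) = (a³ r⁻³ f(a), 0) and π_a(0,g) = (0, a r⁻³ ∫_a^∞ g(ρ) ρ dρ), and consequently ‖π_a(f,g)‖²_{Ḣ¹×L²(r>a)} = 3a³ f(a)² + a (∫_a^∞ ρ g(ρ) dρ)². -/

import Mathlib

open Real MeasureTheory Filter Set Topology

lemma intOn_inv_pow {a : ℝ} (ha : 0 < a) {n : ℕ} (hn : 2 ≤ n) :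
    IntegrableOn (fun r : ℝ => 1 / r ^ n) (Ioi a) := by
  have hlt : -(n:ℝ) < -1 := by
    have h2 : (2:ℝ) ≤ (n:ℝ) := by exact_mod_cast hn
    linarith
  have h : IntegrableOn (fun r : ℝ => r ^ (-(n:ℝ))) (Ioi a) :=
    integrableOn_Ioi_rpow_of_lt hlt ha
  refine h.congr_fun (fun x hx => ?_) measurableSet_Ioi
  dsimp only
  rw [rpow_neg (le_of_lt (ha.trans hx)), rpow_natCast, one_div]

lemma int_inv_pow {a : ℝ} (ha : 0 < a) {n : ℕ} (hn : 2 ≤ n) :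
    ∫ r in Ioi a, 1 / r ^ n = 1 / (((n:ℝ) - 1) * a ^ (n - 1)) := by
  have h2 : (2:ℝ) ≤ (n:ℝ) := by exact_mod_cast hn
  have : ∫ r in Ioi a, 1 / r ^ n = ∫ r in Ioi a, r ^ (-(n:ℝ)) := by
    refine setIntegral_congr_fun measurableSet_Ioi (fun x hx => ?_)
    rw [rpow_neg (le_of_lt (ha.trans hx)), rpow_natCast, one_div]
  rw [this, integral_Ioi_rpow_of_lt (by linarith) ha]
  have hcast : (-(n:ℝ) + 1) = -((n - 1 : ℕ) : ℝ) := by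
    push_cast [Nat.cast_sub (by omega : 1 ≤ n)]; ring
  rw [hcast, rpow_neg ha.le, rpow_natCast]
  have h1 : ((n - 1 : ℕ) : ℝ) = (n:ℝ) - 1 := by
    push_cast [Nat.cast_sub (by omega : 1 ≤ n)]; ring
  rw [h1, div_eq_div_iff (neg_ne_zero.mpr (ne_of_gt (by linarith))) (ne_of_gt (mul_pos (by linarith) (by positivity)))]
  field_simp

/-- The orthogonal projection onto the plane P(a) = {(c₁r⁻³, c₂r⁻³)} in Ḣ¹ × L²(r > a):
    π_a(f,g) = (a³r⁻³f(a), a r⁻³ ∫ₐ^∞ gρ dρ).  The difference is orthogonal to P(a)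
    and ‖π_a(f,g)‖² = 3a³f(a)² + a(∫ₐ^∞ ρg dρ)². -/
theorem stmt13 (a : ℝ) (ha : 0 < a) (f f' g : ℝ → ℝ)
    (hf : ∀ r : ℝ, a ≤ r → HasDerivAt f (f' r) r)
    (hf2 : IntegrableOn (fun r => f' r ^ 2 * r ^ 4) (Ioi a))
    (hflim : Tendsto f atTop (nhds 0))
    (hg2 : IntegrableOn (fun r => g r ^ 2 * r ^ 4) (Ioi a))
    (hg1 : IntegrableOn (fun r => g r * r) (Ioi a)) :
    -- orthogonality of f - a³r⁻³f(a) to every c·r⁻³ in Ḣ¹(r>a):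
    (∀ c : ℝ, ∫ r in Ioi a,
        ((f' r - (-3 * a ^ 3 * f a / r ^ 4)) * (-3 * c / r ^ 4)) * r ^ 4 = 0) ∧
    -- orthogonality of g - a r⁻³ ∫ₐ^∞ gρ dρ to every c·r⁻³ in L²(r>a):
    (∀ c : ℝ, ∫ r in Ioi a,
        ((g r - a * (∫ ρ in Ioi a, g ρ * ρ) / r ^ 3) * (c / r ^ 3)) * r ^ 4 = 0) ∧
    -- norm of the projection:
    ((∫ r in Ioi a, (-3 * a ^ 3 * f a / r ^ 4) ^ 2 * r ^ 4)
        + (∫ r in Ioi a, (a * (∫ ρ in Ioi a, g ρ * ρ) / r ^ 3) ^ 2 * r ^ 4)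
      = 3 * a ^ 3 * (f a) ^ 2 + a * (∫ ρ in Ioi a, g ρ * ρ) ^ 2) := by
  have ha' : a ≠ 0 := ne_of_gt ha
  have hI4 : ∫ r in Ioi a, 1 / r ^ 4 = 1 / (3 * a ^ 3) := by
    rw [int_inv_pow ha (by norm_num)]; norm_num
  have hI2 : ∫ r in Ioi a, 1 / r ^ 2 = 1 / a := by
    rw [int_inv_pow ha (by norm_num)]; norm_num
  have hint4 : IntegrableOn (fun r : ℝ => 1 / r ^ 4) (Ioi a) := intOn_inv_pow ha (by norm_num)
  have hint2 : IntegrableOn (fun r : ℝ => 1 / r ^ 2) (Ioi a) := intOn_inv_pow ha (by norm_num)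
  -- f' is integrable on (a, ∞)
  have hmeas : AEStronglyMeasurable f' (volume.restrict (Ioi a)) := by
    have heq : f' =ᶠ[ae (volume.restrict (Ioi a))] deriv f := by
      rw [Filter.EventuallyEq, ae_restrict_iff' measurableSet_Ioi]
      filter_upwards with r hr
      exact ((hf r (le_of_lt hr)).deriv).symm
    exact ((measurable_deriv f).aestronglyMeasurable).congr heq.symm
  have hf'int : IntegrableOn f' (Ioi a) := by
    have hbd : Integrable (fun r => (f' r ^ 2 * r ^ 4 + 1 / r ^ 4) / 2)
        (volume.restrict (Ioi a)) := (hf2.add hint4).div_const 2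
    refine hbd.mono' hmeas ?_
    rw [ae_restrict_iff' measurableSet_Ioi]
    filter_upwards with r hr
    have hr0 : (0:ℝ) < r := ha.trans hr
    set u := 1 / r ^ 2 with hu
    have hu1 : r ^ 2 * u = 1 := by rw [hu]; exact mul_one_div_cancel (pow_ne_zero 2 hr0.ne')
    have hu4 : 1 / r ^ 4 = u ^ 2 := by rw [hu]; ring
    rw [Real.norm_eq_abs, hu4, abs_le]
    constructor <;> nlinarith [sq_nonneg (f' r * r ^ 2 - u), sq_nonneg (f' r * r ^ 2 + u)]
  have hFTC : ∫ r in Ioi a, f' r = -(f a) := by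
    have := integral_Ioi_of_hasDerivAt_of_tendsto
      (f := f) (f' := f') (a := a) (m := 0)
      ((hf a le_rfl).continuousAt.continuousWithinAt)
      (fun x hx => hf x (le_of_lt hx)) hf'int hflim
    simpa using this
  set I := ∫ ρ in Ioi a, g ρ * ρ with hIdef
  refine ⟨fun c => ?_, fun c => ?_, ?_⟩
  · have hcong : ∀ r ∈ Ioi a,
        ((f' r - (-3 * a ^ 3 * f a / r ^ 4)) * (-3 * c / r ^ 4)) * r ^ 4
          = (-3 * c) * f' r + (-9 * c * a ^ 3 * f a) * (1 / r ^ 4) := by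
      intro r hr
      have hr0 : r ≠ 0 := ne_of_gt (ha.trans hr)
      field_simp
      ring
    rw [setIntegral_congr_fun measurableSet_Ioi hcong,
      integral_add (hf'int.const_mul _) (hint4.const_mul _),
      integral_const_mul, integral_const_mul, hFTC, hI4]
    field_simp
    ring
  · have hcong : ∀ r ∈ Ioi a,
        ((g r - a * I / r ^ 3) * (c / r ^ 3)) * r ^ 4
          = c * (g r * r) + (-(c * a * I)) * (1 / r ^ 2) := by
      intro r hr
      have hr0 : r ≠ 0 := ne_of_gt (ha.trans hr)
      field_simp
      ring
    rw [setIntegral_congr_fun measurableSet_Ioi hcong,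
      integral_add (hg1.const_mul _) (hint2.const_mul _),
      integral_const_mul, integral_const_mul, hI2, ← hIdef]
    field_simp
    ring
  · have hc1 : ∀ r ∈ Ioi a, (-3 * a ^ 3 * f a / r ^ 4) ^ 2 * r ^ 4
        = (9 * a ^ 6 * f a ^ 2) * (1 / r ^ 4) := by
      intro r hr
      have hr0 : r ≠ 0 := ne_of_gt (ha.trans hr)
      field_simp
      ring
    have hc2 : ∀ r ∈ Ioi a, (a * I / r ^ 3) ^ 2 * r ^ 4
        = (a ^ 2 * I ^ 2) * (1 / r ^ 2) := by
      intro r hr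
      have hr0 : r ≠ 0 := ne_of_gt (ha.trans hr)
      field_simp
    rw [setIntegral_congr_fun measurableSet_Ioi hc1,
      setIntegral_congr_fun measurableSet_Ioi hc2,
      integral_const_mul, integral_const_mul, hI4, hI2]
    field_simp
    ring
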